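/- arXiv:1706.02759 — 3 statements merged into one kernel-verified Lean document; each statement's English description precedes it below -/
import Mathlib

section
/- For every dimension d ≥ 1 and all vectors u, v ∈ ℝ^d with v ≠ 0 and u + v ≠ 0, one has |log(|u+v|/|v|)| ≤ √(|u|/|v|) + √(|u|/|u+v|). -/
lemma log_le_sqrt_sub (x : ℝ) (hx : 1 ≤ x) :
    Real.log x ≤ Real.sqrt x - 1 / Real.sqrt x := by
  have hx0 : (0:ℝ) < x := lt_of_lt_of_le one_pos hx
  have hs : 0 < Real.sqrt x := Real.sqrt_pos.mpr hx0
  set s := Real.log (Real.sqrt x) with hsdef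
  have hs0 : 0 ≤ s := Real.log_nonneg (Real.one_le_sqrt.mpr hx)
  have hsinh : s ≤ Real.sinh s := Real.self_le_sinh_iff.mpr hs0
  have hlog : Real.log x = 2 * s := by
    rw [hsdef, Real.log_sqrt hx0.le]; ring
  have hexp : Real.exp s = Real.sqrt x := Real.exp_log hs
  have hsv : Real.sinh s = (Real.sqrt x - 1 / Real.sqrt x) / 2 := by
    rw [Real.sinh_eq, Real.exp_neg, hexp, one_div]
  rw [hlog]
  linarith [hsinh, hsv]

lemma abs_log_div_le (a b : ℝ) (ha : 0 < a) (hb : 0 < b) :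
    |Real.log (a / b)| ≤ |a - b| / Real.sqrt (a * b) := by
  wlog hab : b ≤ a generalizing a b
  · have h := this b a hb ha (le_of_not_ge hab)
    rw [mul_comm] at h
    calc |Real.log (a / b)| = |Real.log (b / a)| := by
          rw [Real.log_div ha.ne' hb.ne', Real.log_div hb.ne' ha.ne', abs_sub_comm]
      _ ≤ |b - a| / Real.sqrt (a * b) := h
      _ = |a - b| / Real.sqrt (a * b) := by rw [abs_sub_comm]
  · have h1 : 1 ≤ a / b := (one_le_div hb).mpr hab
    have hkey := log_le_sqrt_sub (a / b) h1
    have hA : 0 < Real.sqrt a := Real.sqrt_pos.mpr ha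
    have hB : 0 < Real.sqrt b := Real.sqrt_pos.mpr hb
    have eA : Real.sqrt a * Real.sqrt a = a := Real.mul_self_sqrt ha.le
    have eB : Real.sqrt b * Real.sqrt b = b := Real.mul_self_sqrt hb.le
    have hsd : Real.sqrt (a / b) = Real.sqrt a / Real.sqrt b := Real.sqrt_div ha.le b
    have hsm : Real.sqrt (a * b) = Real.sqrt a * Real.sqrt b := Real.sqrt_mul ha.le b
    rw [abs_of_nonneg (Real.log_nonneg h1), abs_of_nonneg (by linarith : (0:ℝ) ≤ a - b), hsm]
    have heq : Real.sqrt (a / b) - 1 / Real.sqrt (a / b)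
        = (a - b) / (Real.sqrt a * Real.sqrt b) := by
      rw [hsd, one_div_div, div_sub_div _ _ hB.ne' hA.ne', eA, eB,
        mul_comm (Real.sqrt b) (Real.sqrt a)]
    rw [heq] at hkey
    exact hkey

theorem lemma1_log_inequality (d : ℕ) (hd : 1 ≤ d)
    (u v : EuclideanSpace ℝ (Fin d)) (hv : v ≠ 0) (huv : u + v ≠ 0) :
    |Real.log (‖u + v‖ / ‖v‖)| ≤
      Real.sqrt (‖u‖ / ‖v‖) + Real.sqrt (‖u‖ / ‖u + v‖) := by
  set a := ‖u + v‖ with hadef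
  set b := ‖v‖ with hbdef
  have ha : 0 < a := norm_pos_iff.mpr huv
  have hb : 0 < b := norm_pos_iff.mpr hv
  have hu0 : (0:ℝ) ≤ ‖u‖ := norm_nonneg u
  have hdiff : |a - b| ≤ ‖u‖ := by
    have h := abs_norm_sub_norm_le (u + v) v
    simpa using h
  have hsum : ‖u‖ ≤ a + b := by
    have : u = (u + v) - v := by abel
    calc ‖u‖ = ‖(u + v) - v‖ := by rw [← this]
      _ ≤ a + b := norm_sub_le _ _
  have hA : 0 < Real.sqrt a := Real.sqrt_pos.mpr ha
  have hB : 0 < Real.sqrt b := Real.sqrt_pos.mpr hb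
  have hsU : 0 ≤ Real.sqrt ‖u‖ := Real.sqrt_nonneg _
  have eA : Real.sqrt a * Real.sqrt a = a := Real.mul_self_sqrt ha.le
  have eB : Real.sqrt b * Real.sqrt b = b := Real.mul_self_sqrt hb.le
  have eU : Real.sqrt ‖u‖ * Real.sqrt ‖u‖ = ‖u‖ := Real.mul_self_sqrt hu0
  -- √‖u‖ ≤ √a + √b
  have hsqsum : Real.sqrt ‖u‖ ≤ Real.sqrt a + Real.sqrt b := by
    nlinarith [eA, eB, eU, hsum, mul_nonneg hA.le hB.le]
  have h1 : |Real.log (a / b)| ≤ |a - b| / Real.sqrt (a * b) := abs_log_div_le a b ha hb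
  have hsm : Real.sqrt (a * b) = Real.sqrt a * Real.sqrt b := Real.sqrt_mul ha.le b
  have h2 : |a - b| / Real.sqrt (a * b) ≤ ‖u‖ / (Real.sqrt a * Real.sqrt b) := by
    rw [hsm]
    gcongr
  have h3 : ‖u‖ / (Real.sqrt a * Real.sqrt b)
      ≤ Real.sqrt ‖u‖ / Real.sqrt b + Real.sqrt ‖u‖ / Real.sqrt a := by
    have key : ‖u‖ ≤ Real.sqrt ‖u‖ * (Real.sqrt a + Real.sqrt b) := by
      calc ‖u‖ = Real.sqrt ‖u‖ * Real.sqrt ‖u‖ := eU.symm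
        _ ≤ _ := mul_le_mul_of_nonneg_left hsqsum hsU
    rw [div_add_div _ _ hB.ne' hA.ne', div_le_div_iff₀ (mul_pos hA hB) (mul_pos hB hA)]
    nlinarith [mul_le_mul_of_nonneg_right key (mul_pos hB hA).le]
  have h4 : Real.sqrt ‖u‖ / Real.sqrt b = Real.sqrt (‖u‖ / b) := (Real.sqrt_div hu0 b).symm
  have h5 : Real.sqrt ‖u‖ / Real.sqrt a = Real.sqrt (‖u‖ / a) := (Real.sqrt_div hu0 a).symm
  calc |Real.log (a / b)| ≤ |a - b| / Real.sqrt (a * b) := h1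
    _ ≤ ‖u‖ / (Real.sqrt a * Real.sqrt b) := h2
    _ ≤ Real.sqrt ‖u‖ / Real.sqrt b + Real.sqrt ‖u‖ / Real.sqrt a := h3
    _ = Real.sqrt (‖u‖ / b) + Real.sqrt (‖u‖ / a) := by rw [h4, h5]
end

section
/- For every α with 0 < α < 2 there exists a constant C = C(α) > 0 such that for all x ∈ ℝ² with x ≠ 0 and all t > 0, ∫_0^t ∫_{ℝ²} p_s(y) · |y − x|^{−α} dy ds ≤ C · t · |x|^{−α}. -/
open Real MeasureTheory Set intervalIntegral

/-- Transition density of `d`-dimensional Brownian motion. -/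
noncomputable def p (d : ℕ) (t : ℝ) (y : EuclideanSpace ℝ (Fin d)) : ℝ :=
  (2 * Real.pi * t) ^ (-(d : ℝ) / 2) * Real.exp (-‖y‖ ^ 2 / (2 * t))

lemma oneDim {β r : ℝ} (hβ1 : β < 1) (hr : 0 < r) :
    Integrable ((Ioc (-r) r).indicator fun t : ℝ => |t| ^ (-β)) ∧
    (∫ t : ℝ, (Ioc (-r) r).indicator (fun t : ℝ => |t| ^ (-β)) t) = 2 * (r ^ (1-β) / (1-β)) := by
  have hexp : (-1:ℝ) < -β := by linarith
  have hIpos : IntervalIntegrable (fun t : ℝ => |t| ^ (-β)) volume 0 r := by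
    rw [intervalIntegrable_iff_integrableOn_Ioc_of_le hr.le]
    exact ((intervalIntegrable_iff_integrableOn_Ioc_of_le hr.le).1
      (intervalIntegrable_rpow' hexp)).congr_fun
      (fun t ht => by rw [abs_of_pos ht.1]) measurableSet_Ioc
  have hIneg : IntervalIntegrable (fun t : ℝ => |t| ^ (-β)) volume (-r) 0 := by
    have h2 := (IntervalIntegrable.iff_comp_neg).mp hIpos
    simp only [abs_neg, neg_zero] at h2
    exact h2.symm
  have hI : IntervalIntegrable (fun t : ℝ => |t| ^ (-β)) volume (-r) r := hIneg.trans hIpos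
  have hval0 : (∫ t in (0:ℝ)..r, |t| ^ (-β)) = r ^ (1-β) / (1-β) := by
    rw [intervalIntegral.integral_congr (g := fun t : ℝ => t ^ (-β))
      (fun t ht => by
        rcases eq_or_ne t 0 with h | h
        · simp [h]
        · rw [uIcc_of_le hr.le] at ht
          rw [abs_of_pos (lt_of_le_of_ne ht.1 (Ne.symm h))]),
      integral_rpow (Or.inl hexp)]
    rw [Real.zero_rpow (by linarith)]
    ring_nf
  have hvalneg : (∫ t in (-r)..(0:ℝ), |t| ^ (-β)) = r ^ (1-β) / (1-β) := by
    have := intervalIntegral.integral_comp_neg (a := (0:ℝ)) (b := r) (fun t : ℝ => |t| ^ (-β))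
    simp only [abs_neg, neg_zero] at this
    rw [← hval0, ← this]
  constructor
  · rw [integrable_indicator_iff measurableSet_Ioc]
    exact (intervalIntegrable_iff_integrableOn_Ioc_of_le (by linarith)).1 hI
  · rw [MeasureTheory.integral_indicator measurableSet_Ioc,
      ← intervalIntegral.integral_of_le (by linarith : -r ≤ r),
      ← intervalIntegral.integral_add_adjacent_intervals hIneg hIpos, hval0, hvalneg]
    ring

lemma p_two_eq (s : ℝ) (y : EuclideanSpace ℝ (Fin 2)) :
    p 2 s y = (2 * Real.pi * s) ^ (-(2:ℝ) / 2) * Real.exp (-((2*s)⁻¹) * ‖y‖ ^ 2) := by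
  rcases eq_or_ne s 0 with h | h
  · simp [p, h]
  · unfold p
    norm_num
    left
    ring

lemma exp_integrable (s : ℝ) (hs : 0 < s) :
    Integrable (fun y : EuclideanSpace ℝ (Fin 2) => Real.exp (-((2*s)⁻¹) * ‖y‖ ^ 2)) := by
  have hb : (0:ℝ) < ((((2*s)⁻¹ : ℝ)) : ℂ).re := by
    simp only [Complex.ofReal_re]
    positivity
  have h := (GaussianFourier.integrable_cexp_neg_mul_sq_norm_add
    (V := EuclideanSpace ℝ (Fin 2)) hb 0 0).norm
  refine h.congr (Filter.Eventually.of_forall fun y => ?_)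
  simp only [zero_mul, add_zero, Complex.norm_exp]
  norm_cast

lemma p_integrable (s : ℝ) (hs : 0 < s) :
    Integrable (p 2 s) (volume : Measure (EuclideanSpace ℝ (Fin 2))) := by
  have := (exp_integrable s hs).const_mul ((2 * Real.pi * s) ^ (-(2:ℝ) / 2))
  refine this.congr (Filter.Eventually.of_forall fun y => ?_)
  rw [p_two_eq]

lemma p_integral (s : ℝ) (hs : 0 < s) :
    (∫ y : EuclideanSpace ℝ (Fin 2), p 2 s y) = 1 := by
  have hb : (0:ℝ) < (2*s)⁻¹ := by positivity
  have h := GaussianFourier.integral_rexp_neg_mul_sq_norm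
    (V := EuclideanSpace ℝ (Fin 2)) hb
  simp only [p_two_eq]
  rw [MeasureTheory.integral_const_mul, h, finrank_euclideanSpace_fin]
  norm_num [Real.rpow_neg_one]
  field_simp

lemma ae_coord_ne (x : EuclideanSpace ℝ (Fin 2)) (i : Fin 2) :
    ∀ᵐ y : EuclideanSpace ℝ (Fin 2) ∂volume, y i ≠ x i := by
  have e := EuclideanSpace.volume_preserving_symm_measurableEquiv_toLp (Fin 2)
  have hpi : (volume : Measure (Fin 2 → ℝ)) {v | v i = x i} = 0 := by
    rw [volume_pi]
    exact Measure.pi_hyperplane (fun _ => (volume : Measure ℝ)) i (x i)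
  have hms : MeasurableSet {v : Fin 2 → ℝ | v i = x i} := by
    have : {v : Fin 2 → ℝ | v i = x i} = (fun v : Fin 2 → ℝ => v i) ⁻¹' {x i} := by
      ext v; simp
    rw [this]
    exact (measurable_pi_apply i) (measurableSet_singleton (x i))
  have := e.measure_preimage hms.nullMeasurableSet
  rw [hpi] at this
  rw [Filter.eventually_iff, mem_ae_iff]
  convert this using 2
  ext y
  simp [Set.preimage]

set_option maxHeartbeats 1000000 in
lemma inner_bound (α : ℝ) (hα0 : 0 < α) (hα2 : α < 2)
    (x : EuclideanSpace ℝ (Fin 2)) (hx : x ≠ 0) (s : ℝ) (hs : 0 < s) :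
    (∫ y : EuclideanSpace ℝ (Fin 2), p 2 s y * ‖y - x‖ ^ (-α)) ≤
      (4 + 8 / (1 - α/2)^2) * ‖x‖ ^ (-α) := by
  have hxn : 0 < ‖x‖ := norm_pos_iff.2 hx
  set β : ℝ := α / 2 with hβ
  have hβ0 : 0 < β := by positivity
  have hβ1 : β < 1 := by rw [hβ]; linarith
  set r : ℝ := ‖x‖ / 2 with hrdef
  have hr : 0 < r := by positivity
  set H : ℝ → ℝ := (Ioc (-r) r).indicator fun t : ℝ => |t| ^ (-β) with hH
  obtain ⟨hHint, hHval⟩ := oneDim (β := β) (r := r) hβ1 hr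
  have hHnn : ∀ t, 0 ≤ H t :=
    fun t => Set.indicator_nonneg (fun u _ => rpow_nonneg (abs_nonneg u) _) t
  set M : ℝ := (2 * Real.pi * s) ^ (-(2:ℝ) / 2) * Real.exp (-‖x‖ ^ 2 / (8 * s)) with hM
  have hMnn : 0 ≤ M := mul_nonneg (rpow_nonneg (by positivity) _) (exp_pos _).le
  have hpnn : ∀ y, 0 ≤ p 2 s y := fun y => by
    unfold p
    exact mul_nonneg (rpow_nonneg (by positivity) _) (exp_pos _).le
  -- integrability of the near-region dominator
  have hg2int : Integrable (fun y : EuclideanSpace ℝ (Fin 2) => ∏ i, H (y i - x i)) := by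
    have hpi : Integrable (fun v : Fin 2 → ℝ => ∏ i, H (v i - x i)) :=
      Integrable.fintype_prod (f := fun i t => H (t - x i))
        (fun i => hHint.comp_sub_right (x i))
    exact ((EuclideanSpace.volume_preserving_symm_measurableEquiv_toLp
      (Fin 2)).integrable_comp_emb (MeasurableEquiv.measurableEmbedding _)).2 hpi
  have hg2val : (∫ y : EuclideanSpace ℝ (Fin 2), ∏ i, H (y i - x i))
      = (2 * (r ^ (1-β) / (1-β)))^2 := by
    have e := EuclideanSpace.volume_preserving_symm_measurableEquiv_toLp (Fin 2)
    have h1 : (∫ y : EuclideanSpace ℝ (Fin 2), ∏ i, H (y i - x i))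
        = ∫ v : Fin 2 → ℝ, ∏ i, H (v i - x i) :=
      e.integral_comp' (fun v => ∏ i, H (v i - x i))
    rw [h1, volume_pi, MeasureTheory.integral_fintype_prod_eq_prod (f := fun i t => H (t - x i))]
    have h2 : ∀ i : Fin 2, (∫ t : ℝ, H (t - x i)) = 2 * (r ^ (1-β) / (1-β)) := fun i => by
      rw [MeasureTheory.integral_sub_right_eq_self H (x i), hHval]
    rw [Fin.prod_univ_two, h2 0, h2 1, sq]
  -- a.e. pointwise domination
  have hae : ∀ᵐ y : EuclideanSpace ℝ (Fin 2) ∂volume,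
      p 2 s y * ‖y - x‖ ^ (-α) ≤ r ^ (-α) * p 2 s y + M * ∏ i, H (y i - x i) := by
    filter_upwards [ae_coord_ne x 0, ae_coord_ne x 1] with y h0 h1
    rcases le_or_gt r ‖y - x‖ with hcase | hcase
    · have hb : ‖y - x‖ ^ (-α) ≤ r ^ (-α) :=
        rpow_le_rpow_of_nonpos hr hcase (by linarith)
      have : p 2 s y * ‖y - x‖ ^ (-α) ≤ r ^ (-α) * p 2 s y := by
        rw [mul_comm (r ^ (-α))]
        exact mul_le_mul_of_nonneg_left hb (hpnn y)
      exact le_add_of_le_of_nonneg this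
        (mul_nonneg hMnn (Finset.prod_nonneg fun i _ => hHnn _))
    · -- near region
      have hyb : r ≤ ‖y‖ := by
        have h2 := abs_norm_sub_norm_le x y
        have h3 : ‖x - y‖ = ‖y - x‖ := norm_sub_rev x y
        have h4 := (abs_le.1 h2).2
        rw [h3] at h4
        have h5 : ‖x‖ - ‖y‖ < r := lt_of_le_of_lt h4 hcase
        rw [hrdef] at h5 ⊢
        linarith
      have hpy : p 2 s y ≤ M := by
        have hy2 : ‖x‖^2/4 ≤ ‖y‖^2 := by
          have := pow_le_pow_left₀ hr.le hyb 2
          rw [hrdef] at this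
          nlinarith
        unfold p; rw [hM]
        push_cast
        refine mul_le_mul_of_nonneg_left (exp_le_exp.2 ?_) (rpow_nonneg (by positivity) _)
        rw [div_le_div_iff₀ (by positivity) (by positivity)]
        nlinarith [mul_le_mul_of_nonneg_left hy2 hs.le]
      -- coordinates
      have hsub : ∀ i, (y - x) i = y i - x i := fun i => rfl
      obtain ⟨a, hA⟩ : ∃ a : ℝ, y 0 - x 0 = a := ⟨_, rfl⟩
      obtain ⟨b, hB⟩ : ∃ b : ℝ, y 1 - x 1 = b := ⟨_, rfl⟩
      have hnorm : ‖y - x‖ = Real.sqrt (a^2 + b^2) := by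
        rw [EuclideanSpace.norm_eq, Fin.sum_univ_two, hsub 0, hsub 1, hA, hB]
        simp [sq_abs]
      have hnsq : ‖y - x‖^2 = a^2 + b^2 := by
        rw [hnorm, Real.sq_sqrt (by positivity)]
      have ha : a ≠ 0 := hA ▸ sub_ne_zero.2 h0
      have hb : b ≠ 0 := hB ▸ sub_ne_zero.2 h1
      have habpos : 0 < |a| * |b| := mul_pos (abs_pos.2 ha) (abs_pos.2 hb)
      have hab_le : |a| * |b| ≤ ‖y - x‖^2 := by
        rw [hnsq]
        nlinarith [sq_nonneg (|a| - |b|), sq_abs a, sq_abs b]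
      have hyx0 : 0 < ‖y - x‖ := by
        nlinarith [norm_nonneg (y - x)]
      have key1 : ‖y - x‖ ^ (-α) = (‖y - x‖^2) ^ (-β) := by
        rw [← Real.rpow_natCast (‖y - x‖) 2, ← Real.rpow_mul (norm_nonneg _)]
        congr 1
        push_cast [hβ]
        ring
      have key2 : (‖y - x‖^2) ^ (-β) ≤ (|a| * |b|) ^ (-β) :=
        rpow_le_rpow_of_nonpos habpos hab_le (by linarith)
      have key3 : (|a| * |b|) ^ (-β) = |a| ^ (-β) * |b| ^ (-β) :=
        Real.mul_rpow (abs_nonneg _) (abs_nonneg _)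
      have haIoc : a ∈ Ioc (-r) r := by
        have : |a| ≤ ‖y - x‖ := by
          rw [hnorm, ← Real.sqrt_sq_eq_abs]
          exact Real.sqrt_le_sqrt (by nlinarith [sq_nonneg b])
        have habs : |a| < r := lt_of_le_of_lt this hcase
        have := abs_lt.1 habs
        exact ⟨this.1, this.2.le⟩
      have hbIoc : b ∈ Ioc (-r) r := by
        have : |b| ≤ ‖y - x‖ := by
          rw [hnorm, ← Real.sqrt_sq_eq_abs]
          exact Real.sqrt_le_sqrt (by nlinarith [sq_nonneg a])
        have habs : |b| < r := lt_of_le_of_lt this hcase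
        have := abs_lt.1 habs
        exact ⟨this.1, this.2.le⟩
      have hprod : (∏ i, H (y i - x i)) = |a| ^ (-β) * |b| ^ (-β) := by
        rw [Fin.prod_univ_two, hA, hB, hH]
        rw [Set.indicator_of_mem haIoc, Set.indicator_of_mem hbIoc]
      have hfinal : p 2 s y * ‖y - x‖ ^ (-α) ≤ M * ∏ i, H (y i - x i) := by
        rw [hprod, ← key3]
        exact mul_le_mul hpy (key1 ▸ key2) (rpow_nonneg (norm_nonneg _) _) hMnn
      exact le_add_of_nonneg_of_le
        (mul_nonneg (rpow_nonneg hr.le _) (hpnn y)) hfinal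
  -- integrate
  have hg1int : Integrable (fun y : EuclideanSpace ℝ (Fin 2) => r ^ (-α) * p 2 s y) :=
    (p_integrable s hs).const_mul _
  have hgint := hg1int.add (hg2int.const_mul M)
  have hmono := integral_mono_of_nonneg
    (Filter.Eventually.of_forall fun y =>
      mul_nonneg (hpnn y) (rpow_nonneg (norm_nonneg _) _)) hgint hae
  have hgval : (∫ y : EuclideanSpace ℝ (Fin 2),
      (r ^ (-α) * p 2 s y + M * ∏ i, H (y i - x i)))
      = r ^ (-α) + M * (2 * (r ^ (1-β) / (1-β)))^2 := by
    rw [integral_add hg1int (hg2int.const_mul M), MeasureTheory.integral_const_mul, MeasureTheory.integral_const_mul,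
      p_integral s hs, hg2val, mul_one]
  simp only [Pi.add_apply] at hmono
  rw [hgval] at hmono
  refine hmono.trans ?_
  -- final arithmetic
  have h42 : (2:ℝ)^(2:ℝ) = 4 := by
    rw [show (2:ℝ) = ((2:ℕ):ℝ) from rfl, Real.rpow_natCast]
    norm_num
  have h2a : (2:ℝ) ^ α ≤ 4 := by
    rw [← h42]
    exact rpow_le_rpow_of_exponent_le one_le_two hα2.le
  have termA : r ^ (-α) ≤ 4 * ‖x‖ ^ (-α) := by
    rw [hrdef, Real.div_rpow (norm_nonneg x) (by norm_num : (0:ℝ) ≤ 2),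
      Real.rpow_neg (by norm_num : (0:ℝ) ≤ 2), div_eq_mul_inv, inv_inv]
    calc ‖x‖ ^ (-α) * 2 ^ α ≤ ‖x‖ ^ (-α) * 4 :=
          mul_le_mul_of_nonneg_left h2a (rpow_nonneg (norm_nonneg x) _)
      _ = 4 * ‖x‖ ^ (-α) := by ring
  have termB : M ≤ 2 * (‖x‖^2)⁻¹ := by
    have hMeq : M = (2*Real.pi*s)⁻¹ * Real.exp (-‖x‖^2/(8*s)) := by
      rw [hM]
      norm_num [Real.rpow_neg_one]
    have hv : (0:ℝ) < ‖x‖^2/(8*s) := by positivity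
    have hev : Real.exp (-(‖x‖^2/(8*s))) ≤ (‖x‖^2/(8*s))⁻¹ := by
      rw [Real.exp_neg]
      exact inv_anti₀ hv (by linarith [Real.add_one_le_exp (‖x‖^2/(8*s))])
    have hstep : M ≤ (2*Real.pi*s)⁻¹ * (‖x‖^2/(8*s))⁻¹ := by
      rw [hMeq, neg_div]
      exact mul_le_mul_of_nonneg_left hev (by positivity)
    have hcalc : (2*Real.pi*s)⁻¹ * (‖x‖^2/(8*s))⁻¹ = (4/Real.pi) * (‖x‖^2)⁻¹ := by
      field_simp
      ring
    have hπ : (4:ℝ)/Real.pi ≤ 2 := by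
      rw [div_le_iff₀ Real.pi_pos]
      nlinarith [Real.pi_gt_three]
    refine hstep.trans ?_
    rw [hcalc]
    exact mul_le_mul_of_nonneg_right hπ (by positivity)
  have termC : (2 * (r^(1-β)/(1-β)))^2 = 4/(1-β)^2 * r ^ ((2:ℝ)-α) := by
    have hsq : (r^(1-β))^2 = r ^ ((2:ℝ)-α) := by
      rw [← Real.rpow_natCast (r^(1-β)) 2, ← Real.rpow_mul hr.le]
      congr 1
      push_cast [hβ]
      ring
    have hexp2 : (2 * (r^(1-β)/(1-β)))^2 = 4 * ((r^(1-β))^2 / (1-β)^2) := by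
      rw [mul_pow, div_pow]
      norm_num
    rw [hexp2, hsq]
    ring
  have termD : r ^ ((2:ℝ)-α) ≤ ‖x‖ ^ ((2:ℝ)-α) := by
    refine Real.rpow_le_rpow hr.le ?_ (by linarith)
    rw [hrdef]
    linarith
  have termE : (‖x‖^2)⁻¹ * ‖x‖ ^ ((2:ℝ)-α) = ‖x‖ ^ (-α) := by
    rw [← Real.rpow_natCast ‖x‖ 2, ← Real.rpow_neg (norm_nonneg x),
      ← Real.rpow_add hxn]
    congr 1
    push_cast
    ring
  have h1 : M * (2 * (r^(1-β)/(1-β)))^2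
      ≤ (2 * (‖x‖^2)⁻¹) * (4/(1-β)^2 * ‖x‖ ^ ((2:ℝ)-α)) := by
    refine mul_le_mul termB ?_ (by positivity) (by positivity)
    rw [termC]
    exact mul_le_mul_of_nonneg_left termD (by positivity)
  have h2 : (2 * (‖x‖^2)⁻¹) * (4/(1-β)^2 * ‖x‖ ^ ((2:ℝ)-α)) = 8/(1-β)^2 * ‖x‖ ^ (-α) := by
    rw [← termE]
    ring
  calc r ^ (-α) + M * (2 * (r ^ (1 - β) / (1 - β))) ^ 2
      ≤ 4 * ‖x‖ ^ (-α) + 8/(1-β)^2 * ‖x‖ ^ (-α) := add_le_add termA (h1.trans_eq h2)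
    _ = (4 + 8/(1-β)^2) * ‖x‖ ^ (-α) := by ring


theorem corollary2_time_integrated_gaussian_bound_2d (α : ℝ) (hα0 : 0 < α) (hα2 : α < 2) :
    ∃ C : ℝ, 0 < C ∧ ∀ (x : EuclideanSpace ℝ (Fin 2)), x ≠ 0 → ∀ t : ℝ, 0 < t →
      (∫ s in (0:ℝ)..t, ∫ y : EuclideanSpace ℝ (Fin 2), p 2 s y * ‖y - x‖ ^ (-α)) ≤
        C * t * ‖x‖ ^ (-α) := by
  refine ⟨4 + 8 / (1 - α/2)^2, by positivity, fun x hx t ht => ?_⟩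
  set C : ℝ := 4 + 8 / (1 - α/2)^2 with hC
  have hCpos : 0 < C := by rw [hC]; positivity
  have hxn : 0 < ‖x‖ := norm_pos_iff.2 hx
  have hXpos : 0 < ‖x‖ ^ (-α) := Real.rpow_pos_of_pos hxn _
  by_cases hInt : IntervalIntegrable
      (fun s => ∫ y : EuclideanSpace ℝ (Fin 2), p 2 s y * ‖y - x‖ ^ (-α)) volume 0 t
  · have hbound : ∀ s ∈ Icc (0:ℝ) t,
        (∫ y : EuclideanSpace ℝ (Fin 2), p 2 s y * ‖y - x‖ ^ (-α)) ≤ C * ‖x‖ ^ (-α) := by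
      intro s hsm
      rcases eq_or_lt_of_le hsm.1 with h0 | h0
      · have hp0 : ∀ y : EuclideanSpace ℝ (Fin 2), p 2 0 y * ‖y - x‖ ^ (-α) = 0 := by
          intro y
          unfold p
          rw [mul_zero, show (-((2:ℕ):ℝ)/2) = (-1 : ℝ) by norm_num, Real.rpow_neg_one]
          simp
        rw [← h0]
        simp only [hp0, integral_zero]
        positivity
      · exact (inner_bound α hα0 hα2 x hx s h0).trans (le_of_eq rfl)
    calc (∫ s in (0:ℝ)..t, ∫ y : EuclideanSpace ℝ (Fin 2), p 2 s y * ‖y - x‖ ^ (-α))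
        ≤ ∫ _ in (0:ℝ)..t, C * ‖x‖ ^ (-α) :=
          intervalIntegral.integral_mono_on ht.le hInt intervalIntegrable_const hbound
      _ = (t - 0) • (C * ‖x‖ ^ (-α)) := intervalIntegral.integral_const _
      _ = C * t * ‖x‖ ^ (-α) := by simp; ring
  · rw [intervalIntegral.integral_undef hInt]
    positivity
end

section
/- For every t > 0 there exists a constant C = C(t) > 0 such that for all x ∈ ℝ³ with 0 < |x| ≤ 1: ∫_0^t ∫_{ℝ³} p_s(y) · (log|y − x|)² dy ds ≤ C. -/
open MeasureTheory Real Metric ENNReal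

local notation "E3" => EuclideanSpace ℝ (Fin 3)

-- L0
lemma log_sq_le (r : ℝ) (hr : 0 ≤ r) : (Real.log r) ^ 2 ≤ 4 * (r + r⁻¹) := by
  rcases eq_or_lt_of_le hr with h | h
  · simp [← h]
  · set u := Real.sqrt r with hu
    have hu0 : 0 < u := Real.sqrt_pos.2 h
    have hur : u ^ 2 = r := Real.sq_sqrt hr
    have hlog : Real.log r = 2 * Real.log u := by
      rw [hu, Real.log_sqrt hr]; ring
    have key : (Real.log u) ^ 2 ≤ u ^ 2 + (u⁻¹) ^ 2 := by
      rcases le_or_gt 1 u with h1 | h1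
      · have h2 : 0 ≤ Real.log u := Real.log_nonneg h1
        have h3 : Real.log u ≤ u := (Real.log_le_sub_one_of_pos hu0).trans (by linarith)
        nlinarith [sq_nonneg (u⁻¹)]
      · have h2 : 0 ≤ Real.log u⁻¹ := Real.log_nonneg ((one_le_inv_iff₀).2 ⟨hu0, h1.le⟩)
        have h3 : Real.log u⁻¹ ≤ u⁻¹ :=
          (Real.log_le_sub_one_of_pos (by positivity)).trans (by linarith [inv_pos.2 hu0])
        have h4 : Real.log u⁻¹ = - Real.log u := Real.log_inv u
        nlinarith [sq_nonneg u]
    have hinv : (u⁻¹) ^ 2 = r⁻¹ := by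
      rw [← hur]; rw [inv_pow]
    calc (Real.log r) ^ 2 = 4 * (Real.log u) ^ 2 := by rw [hlog]; ring
    _ ≤ 4 * (u ^ 2 + (u⁻¹) ^ 2) := by linarith
    _ = 4 * (r + r⁻¹) := by rw [hur, hinv]

lemma integrable_gauss {b : ℝ} (hb : 0 < b) :
    Integrable (fun y : E3 => Real.exp (-b * ‖y‖ ^ 2)) := by
  have h := (GaussianFourier.integrable_cexp_neg_mul_sq_norm_add
      (b := (b : ℂ)) (by simpa using hb) 0 (0 : E3)).norm
  refine h.congr (Filter.Eventually.of_forall fun v => ?_)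
  simp [Complex.norm_exp]
  left
  norm_cast

lemma lintegral_gauss {b : ℝ} (hb : 0 < b) :
    ∫⁻ y : E3, ENNReal.ofReal (Real.exp (-b * ‖y‖ ^ 2)) =
      ENNReal.ofReal ((π / b) ^ ((3:ℝ) / 2)) := by
  rw [← ofReal_integral_eq_lintegral_ofReal (integrable_gauss hb)
      (Filter.Eventually.of_forall fun y => (Real.exp_pos _).le)]
  congr 1
  have := GaussianFourier.integral_rexp_neg_mul_sq_norm (V := E3) hb
  simpa [finrank_euclideanSpace] using this

lemma lintegral_inv_norm_ball {R : ℝ} (hR : 0 < R) :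
    ∫⁻ z in ball (0 : E3) R, ENNReal.ofReal ‖z‖⁻¹ ≤
      ENNReal.ofReal (R ^ 2) * (16 * volume (ball (0 : E3) 1)) := by
  set v := volume (ball (0 : E3) 1) with hv
  set S : ℕ → Set E3 := fun n => {z | R / 2 ^ (n + 1) ≤ ‖z‖ ∧ ‖z‖ < R / 2 ^ n} with hS
  set T : ℕ → Set E3 := fun n => Nat.rec ({0} : Set E3) (fun m _ => S m) n with hT
  have hcover : ball (0 : E3) R ⊆ ⋃ n, T n := by
    intro z hz
    rcases eq_or_ne z 0 with rfl | hz0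
    · exact Set.mem_iUnion.2 ⟨0, rfl⟩
    · have hzpos : 0 < ‖z‖ := norm_pos_iff.2 hz0
      have hzR : ‖z‖ < R := by simpa [mem_ball_zero_iff] using hz
      have hex : ∃ n : ℕ, R ≤ 2 ^ (n + 1) * ‖z‖ := by
        obtain ⟨n, hn⟩ := pow_unbounded_of_one_lt (R / ‖z‖) (one_lt_two (α := ℝ))
        rw [div_lt_iff₀ hzpos] at hn
        have h2 : (2:ℝ) ^ n ≤ 2 ^ (n + 1) :=
          pow_le_pow_right₀ (one_le_two (α := ℝ)) (Nat.le_succ n)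
        exact ⟨n, by nlinarith⟩
      classical
      set n := Nat.find hex with hn
      have h1 : R ≤ 2 ^ (n + 1) * ‖z‖ := Nat.find_spec hex
      have h2 : ‖z‖ < R / 2 ^ n := by
        rcases Nat.eq_zero_or_pos n with h0 | h0
        · rw [h0]; simpa using hzR
        · have hmin := Nat.find_min hex (m := n - 1) (by omega)
          push_neg at hmin
          rw [Nat.sub_add_cancel h0] at hmin
          rw [lt_div_iff₀ (by positivity)]
          linarith
      refine Set.mem_iUnion.2 ⟨n + 1, ?_⟩
      exact ⟨by rw [div_le_iff₀ (by positivity)]; linarith, h2⟩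
  have hstep : ∀ n : ℕ, ∫⁻ z in T n, ENNReal.ofReal ‖z‖⁻¹ ≤
      ENNReal.ofReal (8 * R ^ 2 * (4⁻¹ : ℝ) ^ n) * v := by
    intro n
    cases n with
    | zero =>
        have : (∫⁻ z in T 0, ENNReal.ofReal ‖z‖⁻¹) = 0 :=
          setLIntegral_measure_zero _ _ (measure_singleton 0)
        rw [this]; exact zero_le
    | succ m =>
        have hTm : T (m + 1) = S m := rfl
        rw [hTm, hS]
        have hrm : (0:ℝ) < R / 2 ^ (m+1) := by positivity
        calc ∫⁻ z in {z : E3 | R / 2 ^ (m + 1) ≤ ‖z‖ ∧ ‖z‖ < R / 2 ^ m}, ENNReal.ofReal ‖z‖⁻¹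
            ≤ ∫⁻ _ in {z : E3 | R / 2 ^ (m + 1) ≤ ‖z‖ ∧ ‖z‖ < R / 2 ^ m},
                ENNReal.ofReal ((R / 2 ^ (m+1))⁻¹) := by
              refine setLIntegral_mono measurable_const fun z hz => ?_
              exact ENNReal.ofReal_le_ofReal (inv_anti₀ hrm hz.1)
          _ = ENNReal.ofReal ((R / 2 ^ (m+1))⁻¹) *
                volume {z : E3 | R / 2 ^ (m + 1) ≤ ‖z‖ ∧ ‖z‖ < R / 2 ^ m} := setLIntegral_const _ _
          _ ≤ ENNReal.ofReal ((R / 2 ^ (m+1))⁻¹) * volume (ball (0:E3) (R / 2 ^ m)) := by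
              refine mul_le_mul_right (measure_mono fun z hz => ?_) _
              exact mem_ball_zero_iff.2 hz.2
          _ ≤ ENNReal.ofReal (8 * R ^ 2 * (4⁻¹ : ℝ) ^ (m+1)) * v := by
              rw [hv, Measure.addHaar_ball volume _ (by positivity : (0:ℝ) ≤ R / 2 ^ m)]
              rw [← mul_assoc, ← ENNReal.ofReal_mul (by positivity)]
              refine mul_le_mul_left (ENNReal.ofReal_le_ofReal (le_of_eq ?_)) _
              rw [finrank_euclideanSpace]
              simp only [Fintype.card_fin]
              have h2 : (2:ℝ) ^ (m+1) ≠ 0 := by positivity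
              field_simp
              have h8 : ((2:ℝ)^m)^3 = 2^m * 4^m := by
                rw [← pow_mul, pow_mul', ← mul_pow]; norm_num
              rw [h8]
              have h4 : ((1:ℝ)/4)^m * 4^m = 1 := by rw [← mul_pow]; norm_num
              linear_combination (-((2:ℝ)^m*2)) * h4
  have hsum : ∑' n : ℕ, ENNReal.ofReal (8 * R ^ 2 * (4⁻¹ : ℝ) ^ n) * v ≤
      ENNReal.ofReal (R ^ 2) * (16 * v) := by
    have hterm : ∀ n : ℕ, ENNReal.ofReal (8 * R ^ 2 * (4⁻¹ : ℝ) ^ n) * v =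
        (ENNReal.ofReal (8 * R ^ 2) * v) * (ENNReal.ofReal (4⁻¹ : ℝ)) ^ n := by
      intro n
      rw [ENNReal.ofReal_mul (by positivity), ENNReal.ofReal_pow (by norm_num)]
      ring
    rw [tsum_congr hterm, ENNReal.tsum_mul_left, ENNReal.tsum_geometric]
    have hgeo : (1 - ENNReal.ofReal (4⁻¹ : ℝ))⁻¹ ≤ 2 := by
      have h1 : (1 : ℝ≥0∞) - ENNReal.ofReal (4⁻¹:ℝ) = ENNReal.ofReal (3/4 : ℝ) := by
        rw [← ENNReal.ofReal_one, ← ENNReal.ofReal_sub _ (by norm_num)]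
        norm_num
      rw [h1, ← ENNReal.ofReal_inv_of_pos (by norm_num)]
      calc ENNReal.ofReal ((3/4:ℝ)⁻¹) ≤ ENNReal.ofReal 2 := ENNReal.ofReal_le_ofReal (by norm_num)
        _ = 2 := by norm_num
    calc ENNReal.ofReal (8 * R ^ 2) * v * (1 - ENNReal.ofReal (4⁻¹:ℝ))⁻¹
        ≤ ENNReal.ofReal (8 * R ^ 2) * v * 2 := mul_le_mul_right hgeo _
      _ = ENNReal.ofReal (R ^ 2) * (16 * v) := by
          rw [show (8:ℝ) * R ^ 2 = R ^ 2 * 8 by ring, ENNReal.ofReal_mul (by positivity)]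
          norm_num
          ring
  calc ∫⁻ z in ball (0 : E3) R, ENNReal.ofReal ‖z‖⁻¹
      ≤ ∫⁻ z in ⋃ n, T n, ENNReal.ofReal ‖z‖⁻¹ := lintegral_mono_set hcover
    _ ≤ ∑' n, ∫⁻ z in T n, ENNReal.ofReal ‖z‖⁻¹ := lintegral_iUnion_le _ _
    _ ≤ ∑' n : ℕ, ENNReal.ofReal (8 * R ^ 2 * (4⁻¹ : ℝ) ^ n) * v := ENNReal.tsum_le_tsum hstep
    _ ≤ ENNReal.ofReal (R ^ 2) * (16 * v) := hsum

lemma lintegral_translate_ball (x : E3) (R : ℝ) :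
    ∫⁻ y in ball x R, ENNReal.ofReal ‖y - x‖⁻¹ =
      ∫⁻ z in ball (0 : E3) R, ENNReal.ofReal ‖z‖⁻¹ := by
  have h1 : ∀ y : E3, (ball x R).indicator (fun y => ENNReal.ofReal ‖y - x‖⁻¹) y =
      (ball (0:E3) R).indicator (fun z => ENNReal.ofReal ‖z‖⁻¹) (y - x) := by
    intro y
    by_cases hy : y ∈ ball x R
    · have hy' : y - x ∈ ball (0:E3) R := by
        rw [mem_ball_zero_iff]; rw [mem_ball_iff_norm] at hy; exact hy
      rw [Set.indicator_of_mem hy, Set.indicator_of_mem hy']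
    · have hy' : y - x ∉ ball (0:E3) R := by
        rw [mem_ball_zero_iff]; rw [mem_ball_iff_norm] at hy; exact hy
      rw [Set.indicator_of_notMem hy, Set.indicator_of_notMem hy']
  rw [← lintegral_indicator measurableSet_ball, ← lintegral_indicator measurableSet_ball]
  calc ∫⁻ y, (ball x R).indicator (fun y => ENNReal.ofReal ‖y - x‖⁻¹) y
      = ∫⁻ y, (ball (0:E3) R).indicator (fun z => ENNReal.ofReal ‖z‖⁻¹) (y + -x) := by
        simp_rw [← sub_eq_add_neg]; exact lintegral_congr h1
    _ = ∫⁻ z, (ball (0:E3) R).indicator (fun z => ENNReal.ofReal ‖z‖⁻¹) z :=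
        lintegral_add_right_eq_self _ (-x)

lemma exp_mul_norm_le (s : ℝ) (hs : 0 < s) (u : ℝ) (hu : 0 ≤ u) :
    Real.exp (-u ^ 2 / (2 * s)) * (u + 1) ≤
      (Real.sqrt (2 * s) + 1) * Real.exp (-u ^ 2 / (4 * s)) := by
  set a := Real.sqrt (2 * s) with ha'
  have ha : (0:ℝ) < a := Real.sqrt_pos.2 (by linarith)
  have ha2 : a ^ 2 = 2 * s := Real.sq_sqrt (by linarith)
  set E : ℝ := Real.exp (-u ^ 2 / (4 * s)) with hE'
  have hEpos : 0 < E := Real.exp_pos _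
  have hle1 : E ≤ 1 := by
    rw [hE', Real.exp_le_one_iff, neg_div, neg_nonpos]
    positivity
  have key : u * E ≤ a := by
    have hexp : 1 + u ^ 2 / (4 * s) ≤ Real.exp (u ^ 2 / (4 * s)) := by
      linarith [Real.add_one_le_exp (u ^ 2 / (4 * s))]
    have hu' : u ≤ a * Real.exp (u ^ 2 / (4 * s)) := by
      have h4s : 4 * s = 2 * a ^ 2 := by linarith
      have h1 : a * (1 + u ^ 2 / (4 * s)) ≤ a * Real.exp (u ^ 2 / (4 * s)) :=
        mul_le_mul_of_nonneg_left hexp ha.le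
      have h2 : u ≤ a * (1 + u ^ 2 / (4 * s)) := by
        rw [h4s, ← sub_nonneg]
        have heq : a * (1 + u ^ 2 / (2 * a ^ 2)) - u = (a ^ 2 + (a - u) ^ 2) / (2 * a) := by
          field_simp; ring
        rw [heq]; positivity
      linarith
    have hEinv : E = (Real.exp (u ^ 2 / (4 * s)))⁻¹ := by
      rw [hE', ← Real.exp_neg]; congr 1; ring
    rw [hEinv]
    rw [mul_inv_le_iff₀ (Real.exp_pos _)]
    linarith [hu']
  have hsplit : Real.exp (-u ^ 2 / (2 * s)) = E * E := by
    rw [hE', ← Real.exp_add]; congr 1; field_simp; ring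
  calc Real.exp (-u ^ 2 / (2 * s)) * (u + 1) = E * (u * E + E) := by rw [hsplit]; ring
    _ ≤ E * (a + 1) := by
        refine mul_le_mul_of_nonneg_left ?_ hEpos.le
        linarith
    _ = (a + 1) * E := by ring

lemma inner_bound_s12 (t : ℝ) (ht : 0 < t) (s : ℝ) (hs : 0 < s) (hst : s ≤ t)
    (x : E3) (hx : ‖x‖ ≤ 1) :
    (∫ y : E3, p 3 s y * (Real.log ‖y - x‖) ^ 2) ≤
      12 * (Real.sqrt (2 * t) + 1) +
        (64 * (volume (ball (0:E3) 1)).toReal + 4) * s ^ (-(1:ℝ)/2) := by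
  have hπ := Real.pi_gt_three
  have h2pis : (0:ℝ) < 2 * Real.pi * s := by positivity
  set c : ℝ := (2 * Real.pi * s) ^ (-(3:ℝ)/2) with hc'
  have hc : 0 < c := Real.rpow_pos_of_pos h2pis _
  set v := volume (ball (0:E3) 1) with hv'
  have hvfin : v ≠ ⊤ := measure_ball_lt_top.ne
  have hp : ∀ y : E3, p 3 s y = c * Real.exp (-‖y‖ ^ 2 / (2 * s)) := by
    intro y
    simp only [p, hc', Nat.cast_ofNat]
  -- rpow identities
  have hmulid : c * (2 * Real.pi * s) ^ ((3:ℝ)/2) = 1 := by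
    rw [hc', ← Real.rpow_add h2pis]
    norm_num
  have idB : c * (Real.pi * (2 * s)) ^ ((3:ℝ)/2) = 1 := by
    rw [show Real.pi * (2 * s) = 2 * Real.pi * s by ring]
    exact hmulid
  have h232 : (2:ℝ) ^ ((3:ℝ)/2) ≤ 3 := by
    have h1 : (2:ℝ) ^ ((3:ℝ)/2) = ((2:ℝ) ^ (3:ℕ)) ^ ((1:ℝ)/2) := by
      rw [← Real.rpow_natCast 2 3, ← Real.rpow_mul (by norm_num)]
      norm_num
    rw [h1, ← Real.sqrt_eq_rpow]
    rw [show ((2:ℝ) ^ (3:ℕ)) = 8 by norm_num]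
    rw [show (3:ℝ) = Real.sqrt 9 by
      rw [show (9:ℝ) = 3 ^ 2 by norm_num, Real.sqrt_sq (by norm_num)]]
    exact Real.sqrt_le_sqrt (by norm_num)
  have idA : c * (Real.pi * (4 * s)) ^ ((3:ℝ)/2) ≤ 3 := by
    have : Real.pi * (4 * s) = 2 * (2 * Real.pi * s) := by ring
    rw [this, Real.mul_rpow (by norm_num) h2pis.le]
    calc c * ((2:ℝ) ^ ((3:ℝ)/2) * (2 * Real.pi * s) ^ ((3:ℝ)/2))
        = (2:ℝ) ^ ((3:ℝ)/2) * (c * (2 * Real.pi * s) ^ ((3:ℝ)/2)) := by ring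
      _ = (2:ℝ) ^ ((3:ℝ)/2) := by rw [hmulid, mul_one]
      _ ≤ 3 := h232
  have hcs : c * s ≤ s ^ (-(1:ℝ)/2) := by
    have h1 : c ≤ s ^ (-(3:ℝ)/2) := by
      rw [hc']
      apply Real.rpow_le_rpow_of_nonpos hs (by nlinarith) (by norm_num)
    calc c * s ≤ s ^ (-(3:ℝ)/2) * s := by
          exact mul_le_mul_of_nonneg_right h1 hs.le
      _ = s ^ (-(1:ℝ)/2) := by
          have h2 : s ^ (-(3:ℝ)/2) * s = s ^ (-(3:ℝ)/2) * s ^ (1:ℝ) := by rw [Real.rpow_one]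
          rw [h2, ← Real.rpow_add hs]
          norm_num
  have hsqrtinv : (Real.sqrt s)⁻¹ = s ^ (-(1:ℝ)/2) := by
    rw [show (-(1:ℝ)/2) = -(1/2) by norm_num, Real.rpow_neg hs.le, ← Real.sqrt_eq_rpow]
  -- the functions
  set f1 : E3 → ℝ := fun y => (4 * c * (Real.sqrt (2*t) + 1)) * Real.exp (-‖y‖^2 / (4*s))
    with hf1'
  set f2 : E3 → ℝ := fun y => 4 * c * (Real.exp (-‖y‖^2 / (2*s)) * ‖y - x‖⁻¹) with hf2'
  have hcont_e : ∀ a : ℝ, Continuous fun y : E3 => Real.exp (-‖y‖^2 / a) :=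
    fun a => Real.continuous_exp.comp (((continuous_norm.pow 2).neg).div_const _)
  have hmlog : Measurable fun y : E3 => Real.log ‖y - x‖ :=
    Real.measurable_log.comp (continuous_norm.comp (continuous_id.sub continuous_const)).measurable
  have hmf : Measurable fun y : E3 => p 3 s y * (Real.log ‖y - x‖) ^ 2 := by
    have : (fun y : E3 => p 3 s y * (Real.log ‖y - x‖) ^ 2) =
        fun y : E3 => (c * Real.exp (-‖y‖ ^ 2 / (2 * s))) * (Real.log ‖y - x‖) ^ 2 := by
      funext y; rw [hp]
    rw [this]
    exact (continuous_const.mul (hcont_e _)).measurable.mul (hmlog.pow_const 2)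
  have hfnn : 0 ≤ᵐ[volume] fun y : E3 => p 3 s y * (Real.log ‖y - x‖) ^ 2 := by
    refine Filter.Eventually.of_forall fun y => ?_
    simp only [Pi.zero_apply]
    rw [hp y]
    positivity
  have hf1nn : ∀ y, 0 ≤ f1 y := fun y => by
    have := Real.sqrt_nonneg (2*t); positivity
  have hf2nn : ∀ y, 0 ≤ f2 y := fun y => by positivity
  have hmf2 : Measurable fun y : E3 => Real.exp (-‖y‖^2 / (2*s)) * ‖y - x‖⁻¹ :=
    (hcont_e _).measurable.mul
      ((continuous_norm.comp (continuous_id.sub continuous_const)).measurable.inv)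
  -- pointwise bound
  have hpoint : ∀ y : E3, p 3 s y * (Real.log ‖y - x‖) ^ 2 ≤ f1 y + f2 y := by
    intro y
    rw [hp y]
    set r := ‖y - x‖ with hr'
    have hrnn : 0 ≤ r := norm_nonneg _
    set e := Real.exp (-‖y‖^2 / (2*s)) with he'
    have hepos : 0 < e := Real.exp_pos _
    have h1 : c * e * (Real.log r) ^ 2 ≤ c * e * (4 * (r + r⁻¹)) :=
      mul_le_mul_of_nonneg_left (log_sq_le r hrnn) (by positivity)
    have h2 : e * r ≤ (Real.sqrt (2*t) + 1) * Real.exp (-‖y‖^2 / (4*s)) := by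
      have h21 : e * r ≤ e * (‖y‖ + 1) := by
        refine mul_le_mul_of_nonneg_left ?_ hepos.le
        calc r ≤ ‖y‖ + ‖x‖ := norm_sub_le y x
          _ ≤ ‖y‖ + 1 := by linarith
      have h22 := exp_mul_norm_le s hs ‖y‖ (norm_nonneg y)
      have h23 : Real.sqrt (2*s) ≤ Real.sqrt (2*t) := Real.sqrt_le_sqrt (by linarith)
      calc e * r ≤ e * (‖y‖ + 1) := h21
        _ ≤ (Real.sqrt (2*s) + 1) * Real.exp (-‖y‖^2 / (4*s)) := h22
        _ ≤ (Real.sqrt (2*t) + 1) * Real.exp (-‖y‖^2 / (4*s)) :=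
            mul_le_mul_of_nonneg_right (by linarith) (Real.exp_pos _).le
    calc c * e * (Real.log r) ^ 2 ≤ c * e * (4 * (r + r⁻¹)) := h1
      _ = 4 * c * (e * r) + 4 * c * (e * r⁻¹) := by ring
      _ ≤ 4 * c * ((Real.sqrt (2*t) + 1) * Real.exp (-‖y‖^2 / (4*s))) + 4 * c * (e * r⁻¹) := by
          have := mul_le_mul_of_nonneg_left h2 (by positivity : (0:ℝ) ≤ 4 * c)
          linarith
      _ = f1 y + f2 y := by rw [hf1', hf2']; ring
  -- gaussian integral bounds
  have hgauss1 : ∫⁻ y : E3, ENNReal.ofReal (Real.exp (-‖y‖^2 / (4*s))) =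
      ENNReal.ofReal ((Real.pi * (4*s)) ^ ((3:ℝ)/2)) := by
    have hb : (0:ℝ) < (4*s)⁻¹ := by positivity
    have heq : ∀ y : E3, Real.exp (-‖y‖^2 / (4*s)) = Real.exp (-(4*s)⁻¹ * ‖y‖^2) := by
      intro y; congr 1; field_simp
    calc ∫⁻ y : E3, ENNReal.ofReal (Real.exp (-‖y‖^2 / (4*s)))
        = ∫⁻ y : E3, ENNReal.ofReal (Real.exp (-(4*s)⁻¹ * ‖y‖^2)) := by
          exact lintegral_congr fun y => by rw [heq]
      _ = ENNReal.ofReal ((Real.pi / (4*s)⁻¹) ^ ((3:ℝ)/2)) := lintegral_gauss hb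
      _ = ENNReal.ofReal ((Real.pi * (4*s)) ^ ((3:ℝ)/2)) := by congr 1; field_simp
  have hgauss2 : ∫⁻ y : E3, ENNReal.ofReal (Real.exp (-‖y‖^2 / (2*s))) =
      ENNReal.ofReal ((Real.pi * (2*s)) ^ ((3:ℝ)/2)) := by
    have hb : (0:ℝ) < (2*s)⁻¹ := by positivity
    have heq : ∀ y : E3, Real.exp (-‖y‖^2 / (2*s)) = Real.exp (-(2*s)⁻¹ * ‖y‖^2) := by
      intro y; congr 1; field_simp
    calc ∫⁻ y : E3, ENNReal.ofReal (Real.exp (-‖y‖^2 / (2*s)))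
        = ∫⁻ y : E3, ENNReal.ofReal (Real.exp (-(2*s)⁻¹ * ‖y‖^2)) := by
          exact lintegral_congr fun y => by rw [heq]
      _ = ENNReal.ofReal ((Real.pi / (2*s)⁻¹) ^ ((3:ℝ)/2)) := lintegral_gauss hb
      _ = ENNReal.ofReal ((Real.pi * (2*s)) ^ ((3:ℝ)/2)) := by congr 1; field_simp
  -- main bound
  have hI1 : ∫⁻ y : E3, ENNReal.ofReal (f1 y) ≤
      ENNReal.ofReal (12 * (Real.sqrt (2*t) + 1)) := by
    have hk : (0:ℝ) ≤ 4 * c * (Real.sqrt (2*t) + 1) := by positivity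
    calc ∫⁻ y : E3, ENNReal.ofReal (f1 y)
        = ∫⁻ y : E3, ENNReal.ofReal (4 * c * (Real.sqrt (2*t)+1)) *
            ENNReal.ofReal (Real.exp (-‖y‖^2/(4*s))) := by
          refine lintegral_congr fun y => ?_
          rw [hf1', ← ENNReal.ofReal_mul hk]
      _ = ENNReal.ofReal (4 * c * (Real.sqrt (2*t)+1)) *
            ∫⁻ y : E3, ENNReal.ofReal (Real.exp (-‖y‖^2/(4*s))) :=
          lintegral_const_mul _ ((hcont_e _).measurable.ennreal_ofReal)
      _ = ENNReal.ofReal (4 * c * (Real.sqrt (2*t)+1)) *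
            ENNReal.ofReal ((Real.pi * (4*s)) ^ ((3:ℝ)/2)) := by rw [hgauss1]
      _ = ENNReal.ofReal (4 * c * (Real.sqrt (2*t)+1) * (Real.pi * (4*s)) ^ ((3:ℝ)/2)) := by
          rw [← ENNReal.ofReal_mul hk]
      _ ≤ ENNReal.ofReal (12 * (Real.sqrt (2*t) + 1)) := by
          refine ENNReal.ofReal_le_ofReal ?_
          have h0 : (0:ℝ) ≤ Real.sqrt (2*t) + 1 := by positivity
          calc 4 * c * (Real.sqrt (2*t)+1) * (Real.pi * (4*s)) ^ ((3:ℝ)/2)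
              = 4 * (Real.sqrt (2*t)+1) * (c * (Real.pi * (4*s)) ^ ((3:ℝ)/2)) := by ring
            _ ≤ 4 * (Real.sqrt (2*t)+1) * 3 := mul_le_mul_of_nonneg_left idA (by positivity)
            _ = 12 * (Real.sqrt (2*t) + 1) := by ring
  have hI2 : ∫⁻ y : E3, ENNReal.ofReal (f2 y) ≤
      ENNReal.ofReal (64 * v.toReal * s ^ (-(1:ℝ)/2)) + ENNReal.ofReal (4 * s ^ (-(1:ℝ)/2)) := by
    have hR : (0:ℝ) < Real.sqrt s := Real.sqrt_pos.2 hs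
    have hball : (∫⁻ y in ball x (Real.sqrt s),
        ENNReal.ofReal (Real.exp (-‖y‖^2/(2*s)) * ‖y - x‖⁻¹)) ≤ ENNReal.ofReal s * (16 * v) := by
      calc (∫⁻ y in ball x (Real.sqrt s), ENNReal.ofReal (Real.exp (-‖y‖^2/(2*s)) * ‖y - x‖⁻¹))
          ≤ ∫⁻ y in ball x (Real.sqrt s), ENNReal.ofReal (‖y - x‖⁻¹) := by
            refine lintegral_mono fun y => ENNReal.ofReal_le_ofReal ?_
            refine mul_le_of_le_one_left (by positivity) (Real.exp_le_one_iff.2 ?_)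
            rw [neg_div, neg_nonpos]
            positivity
        _ = ∫⁻ z in ball (0:E3) (Real.sqrt s), ENNReal.ofReal ‖z‖⁻¹ :=
            lintegral_translate_ball x _
        _ ≤ ENNReal.ofReal ((Real.sqrt s) ^ 2) * (16 * v) := by
            rw [hv']
            exact lintegral_inv_norm_ball hR
        _ = ENNReal.ofReal s * (16 * v) := by rw [Real.sq_sqrt hs.le]
    have hcompl : (∫⁻ y in (ball x (Real.sqrt s))ᶜ,
        ENNReal.ofReal (Real.exp (-‖y‖^2/(2*s)) * ‖y - x‖⁻¹)) ≤
        ENNReal.ofReal (s ^ (-(1:ℝ)/2)) * ENNReal.ofReal ((Real.pi * (2*s)) ^ ((3:ℝ)/2)) := by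
      calc (∫⁻ y in (ball x (Real.sqrt s))ᶜ,
            ENNReal.ofReal (Real.exp (-‖y‖^2/(2*s)) * ‖y - x‖⁻¹))
          ≤ ∫⁻ y in (ball x (Real.sqrt s))ᶜ,
              ENNReal.ofReal (s ^ (-(1:ℝ)/2) * Real.exp (-‖y‖^2/(2*s))) := by
            refine setLIntegral_mono
              ((measurable_const.mul (hcont_e _).measurable).ennreal_ofReal) fun y hy => ?_
            refine ENNReal.ofReal_le_ofReal ?_
            have hyx : Real.sqrt s ≤ ‖y - x‖ := by
              rw [Set.mem_compl_iff, mem_ball_iff_norm, not_lt] at hy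
              exact hy
            have hinv : ‖y - x‖⁻¹ ≤ s ^ (-(1:ℝ)/2) := by
              rw [← hsqrtinv]
              exact inv_anti₀ hR hyx
            calc Real.exp (-‖y‖^2/(2*s)) * ‖y - x‖⁻¹
                ≤ Real.exp (-‖y‖^2/(2*s)) * s ^ (-(1:ℝ)/2) :=
                  mul_le_mul_of_nonneg_left hinv (Real.exp_pos _).le
              _ = s ^ (-(1:ℝ)/2) * Real.exp (-‖y‖^2/(2*s)) := by ring
        _ ≤ ∫⁻ y : E3, ENNReal.ofReal (s ^ (-(1:ℝ)/2) * Real.exp (-‖y‖^2/(2*s))) :=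
            setLIntegral_le_lintegral _ _
        _ = ENNReal.ofReal (s ^ (-(1:ℝ)/2)) *
              ∫⁻ y : E3, ENNReal.ofReal (Real.exp (-‖y‖^2/(2*s))) := by
            simp_rw [ENNReal.ofReal_mul (Real.rpow_nonneg hs.le _)]
            exact lintegral_const_mul _ ((hcont_e _).measurable.ennreal_ofReal)
        _ = ENNReal.ofReal (s ^ (-(1:ℝ)/2)) * ENNReal.ofReal ((Real.pi * (2*s)) ^ ((3:ℝ)/2)) := by
            rw [hgauss2]
    have h16v : (16:ℝ≥0∞) * v = ENNReal.ofReal (16 * v.toReal) := by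
      rw [ENNReal.ofReal_mul (by norm_num), ENNReal.ofReal_toReal hvfin]
      norm_num
    calc ∫⁻ y : E3, ENNReal.ofReal (f2 y)
        = ENNReal.ofReal (4*c) *
            ∫⁻ y : E3, ENNReal.ofReal (Real.exp (-‖y‖^2/(2*s)) * ‖y - x‖⁻¹) := by
          have : ∀ y : E3, ENNReal.ofReal (f2 y) = ENNReal.ofReal (4*c) *
              ENNReal.ofReal (Real.exp (-‖y‖^2/(2*s)) * ‖y - x‖⁻¹) := by
            intro y
            rw [hf2', ← ENNReal.ofReal_mul (by positivity : (0:ℝ) ≤ 4*c)]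
          rw [lintegral_congr this]
          exact lintegral_const_mul _ hmf2.ennreal_ofReal
      _ = ENNReal.ofReal (4*c) *
            ((∫⁻ y in ball x (Real.sqrt s),
              ENNReal.ofReal (Real.exp (-‖y‖^2/(2*s)) * ‖y - x‖⁻¹)) +
            ∫⁻ y in (ball x (Real.sqrt s))ᶜ,
              ENNReal.ofReal (Real.exp (-‖y‖^2/(2*s)) * ‖y - x‖⁻¹)) := by
          rw [lintegral_add_compl _ measurableSet_ball]
      _ ≤ ENNReal.ofReal (4*c) * (ENNReal.ofReal s * (16 * v) +
            ENNReal.ofReal (s ^ (-(1:ℝ)/2)) * ENNReal.ofReal ((Real.pi * (2*s)) ^ ((3:ℝ)/2))) :=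
          mul_le_mul_right (add_le_add hball hcompl) _
      _ ≤ ENNReal.ofReal (64 * v.toReal * s ^ (-(1:ℝ)/2)) + ENNReal.ofReal (4 * s ^ (-(1:ℝ)/2)) := by
          rw [mul_add]
          refine add_le_add ?_ ?_
          · calc ENNReal.ofReal (4*c) * (ENNReal.ofReal s * (16 * v))
                = ENNReal.ofReal (4*c*s) * (16 * v) := by
                  rw [← mul_assoc, ← ENNReal.ofReal_mul (by positivity)]
              _ ≤ ENNReal.ofReal (4 * s ^ (-(1:ℝ)/2)) * (16 * v) := by
                  refine mul_le_mul_left (ENNReal.ofReal_le_ofReal ?_) _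
                  calc 4*c*s = 4*(c*s) := by ring
                    _ ≤ 4 * s ^ (-(1:ℝ)/2) := by linarith
              _ = ENNReal.ofReal (64 * v.toReal * s ^ (-(1:ℝ)/2)) := by
                  rw [h16v, ← ENNReal.ofReal_mul (by positivity)]
                  congr 1
                  ring
          · rw [← mul_assoc, ← ENNReal.ofReal_mul (by positivity : (0:ℝ) ≤ 4*c),
              ← ENNReal.ofReal_mul (by positivity)]
            refine ENNReal.ofReal_le_ofReal (le_of_eq ?_)
            linear_combination (4 * s ^ (-(1:ℝ)/2)) * idB
  rw [integral_eq_lintegral_of_nonneg_ae hfnn hmf.aestronglyMeasurable]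
  refine ENNReal.toReal_le_of_le_ofReal (by positivity) ?_
  calc ∫⁻ y : E3, ENNReal.ofReal (p 3 s y * (Real.log ‖y-x‖)^2)
      ≤ ∫⁻ y : E3, (ENNReal.ofReal (f1 y) + ENNReal.ofReal (f2 y)) := by
        refine lintegral_mono fun y => ?_
        calc ENNReal.ofReal (p 3 s y * (Real.log ‖y-x‖)^2)
            ≤ ENNReal.ofReal (f1 y + f2 y) := ENNReal.ofReal_le_ofReal (hpoint y)
          _ = ENNReal.ofReal (f1 y) + ENNReal.ofReal (f2 y) :=
              ENNReal.ofReal_add (hf1nn y) (hf2nn y)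
    _ = (∫⁻ y : E3, ENNReal.ofReal (f1 y)) + ∫⁻ y : E3, ENNReal.ofReal (f2 y) :=
        lintegral_add_left ((continuous_const.mul (hcont_e _)).measurable.ennreal_ofReal) _
    _ ≤ ENNReal.ofReal (12 * (Real.sqrt (2*t) + 1)) +
          (ENNReal.ofReal (64 * v.toReal * s ^ (-(1:ℝ)/2)) +
            ENNReal.ofReal (4 * s ^ (-(1:ℝ)/2))) := add_le_add hI1 hI2
    _ = ENNReal.ofReal (12 * (Real.sqrt (2 * t) + 1) +
          (64 * v.toReal + 4) * s ^ (-(1:ℝ)/2)) := by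
        rw [← ENNReal.ofReal_add (by positivity) (by positivity),
          ← ENNReal.ofReal_add (by positivity) (by positivity)]
        congr 1
        ring



theorem lemma3ii_martingale_second_moment_bound (t : ℝ) (ht : 0 < t) :
    ∃ C : ℝ, 0 < C ∧ ∀ x : EuclideanSpace ℝ (Fin 3), 0 < ‖x‖ → ‖x‖ ≤ 1 →
      (∫ s in (0:ℝ)..t, ∫ y : EuclideanSpace ℝ (Fin 3),
        p 3 s y * (Real.log ‖y - x‖) ^ 2) ≤ C := by
  set g : ℝ → ℝ := fun s => 12 * (Real.sqrt (2*t) + 1) +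
    (64 * (volume (ball (0:E3) 1)).toReal + 4) * s ^ (-(1:ℝ)/2) with hg'
  have hgnn : ∀ s ∈ Set.Icc (0:ℝ) t, 0 ≤ g s := by
    intro s hs
    have h1 : (0:ℝ) ≤ Real.sqrt (2*t) := Real.sqrt_nonneg _
    have h2 : (0:ℝ) ≤ s ^ (-(1:ℝ)/2) := Real.rpow_nonneg hs.1 _
    have h3 : (0:ℝ) ≤ (volume (ball (0:E3) 1)).toReal := ENNReal.toReal_nonneg
    have h4 : (0:ℝ) ≤ 64 * (volume (ball (0:E3) 1)).toReal + 4 := by linarith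
    rw [hg']
    have := mul_nonneg h4 h2
    dsimp only
    linarith
  have hgint : IntervalIntegrable g volume 0 t := by
    refine IntervalIntegrable.add intervalIntegrable_const ?_
    exact (intervalIntegral.intervalIntegrable_rpow' (by norm_num)).const_mul _
  have hgI : 0 ≤ ∫ s in (0:ℝ)..t, g s := intervalIntegral.integral_nonneg ht.le hgnn
  refine ⟨(∫ s in (0:ℝ)..t, g s) + 1, by linarith, ?_⟩
  intro x hx0 hx1
  by_cases hInt : IntervalIntegrable
    (fun s => ∫ y : E3, p 3 s y * (Real.log ‖y - x‖) ^ 2) volume 0 t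
  · have hmono : (∫ s in (0:ℝ)..t, ∫ y : E3, p 3 s y * (Real.log ‖y - x‖) ^ 2) ≤
        ∫ s in (0:ℝ)..t, g s := by
      refine intervalIntegral.integral_mono_on ht.le hInt hgint fun s hs => ?_
      rcases eq_or_lt_of_le hs.1 with h0 | h0
      · have hz : ∀ y : E3, p 3 0 y * (Real.log ‖y - x‖) ^ 2 = 0 := by
          intro y
          have h00 : (2 * Real.pi * 0 : ℝ) = 0 := by ring
          rw [p, h00, Real.zero_rpow (by norm_num), zero_mul, zero_mul]
        rw [← h0]
        have : (∫ y : E3, p 3 0 y * (Real.log ‖y - x‖) ^ 2) = 0 := by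
          simp only [hz, integral_zero]
        rw [this]
        exact hgnn 0 ⟨le_refl 0, ht.le⟩
      · exact inner_bound_s12 t ht s h0 hs.2 x hx1
    linarith
  · rw [intervalIntegral.integral_undef hInt]
    linarith
end
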